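/- Let A be a finite set, B ⊆ A with |A\B| ≥ 2, and let a, b ∈ A\B be distinct. For C ⊆ B, the set S*(a, C, b) decomposes as a disjoint union indexed by ordered pairs (s₁, s₂) of disjoint sequences whose underlying sets partition C: a ranking ρ ∈ S*(a, C, b) corresponds to exactly one such pair, namely s₁ lists (in ρ-decreasing order) the elements of C above a and s₂ lists (in ρ-decreasing order) the elements of C below b; moreover, for each such pair (s₁, s₂) the corresponding cell has exactly (|A\C| − 2)! rankings. -/

import Mathlib

open Finset MeasureTheory

variable {α : Type*}

/-- A finite system of best-worst choice probabilities on the ground set `A = univ`: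
each `BW B a b` is in `[0,1]` and the best-worst probabilities over each feasible set sum to 1. -/
def IsBWSystem [Fintype α] [DecidableEq α] (BW : Finset α → α → α → ℝ) : Prop :=
  (∀ B : Finset α, 2 ≤ B.card → ∀ a ∈ B, ∀ b ∈ B, a ≠ b → BW B a b ∈ Set.Icc (0:ℝ) 1) ∧
  ∀ B : Finset α, 2 ≤ B.card → ∑ a ∈ B, ∑ b ∈ B.erase a, BW B a b = 1

/-- The best-worst Block–Marschak polynomial `K_{ab,B} = ∑_{C ⊆ B} (-1)^{|B|-|C|} BW_{A∖C}(a,b)`. -/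
def BMK [Fintype α] [DecidableEq α] (BW : Finset α → α → α → ℝ) (a b : α) (B : Finset α) : ℝ :=
  ∑ C ∈ B.powerset, (-1 : ℝ) ^ (B.card - C.card) * BW Cᶜ a b

/-- A ranking of (all of) `α`: a linear order, encoded as a bijection to `Fin |α|`.
Larger values mean "ranked higher". -/
abbrev Ranking (α : Type*) [Fintype α] := α ≃ Fin (Fintype.card α)

/-- `Sbw D a b` : the set of rankings in which `a` is the maximum and `b` is the minimum of `D`. -/
def Sbw [Fintype α] [DecidableEq α] (D : Finset α) (a b : α) : Finset (Ranking α) :=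
  univ.filter fun ρ => (∀ c ∈ D, ρ c ≤ ρ a) ∧ (∀ c ∈ D, ρ b ≤ ρ c)

/-- `SStar B a b` : the set of rankings in which `a` is the maximum and `b` is the minimum of
`Bᶜ = A∖B` and, in addition, every element of `B` is either above `a` or below `b`. -/
def SStar [Fintype α] [DecidableEq α] (B : Finset α) (a b : α) : Finset (Ranking α) :=
  univ.filter fun ρ =>
    (∀ c ∈ Bᶜ, ρ c ≤ ρ a) ∧ (∀ c ∈ Bᶜ, ρ b ≤ ρ c) ∧ ∀ c ∈ B, ρ a < ρ c ∨ ρ c < ρ b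

set_option linter.unusedSectionVars false
set_option linter.unusedVariables false
set_option maxHeartbeats 1000000

section SStarDecompositionAux
variable [Fintype α] [DecidableEq α]

private lemma rank_card_below (ρ : Ranking α) (x : α) :
    (univ.filter fun y => ρ y < ρ x).card = (ρ x : ℕ) := by
  have : (univ.filter fun y => ρ y < ρ x) = (Finset.Iio (ρ x)).map ρ.symm.toEmbedding := by
    ext y; simp [Equiv.symm_apply_eq, eq_comm]
  rw [this, Finset.card_map, Fin.card_Iio]

private lemma rank_card_above (ρ : Ranking α) (x : α) :
    (univ.filter fun y => ρ x < ρ y).card = Fintype.card α - 1 - (ρ x : ℕ) := by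
  have : (univ.filter fun y => ρ x < ρ y) = (Finset.Ioi (ρ x)).map ρ.symm.toEmbedding := by
    ext y; simp [Equiv.symm_apply_eq, eq_comm]
  rw [this, Finset.card_map, Fin.card_Ioi]

private lemma forced (C : Finset α) (a b : α) (hb : b ∈ Cᶜ)
    (p : List α × List α) (hnd : (p.1 ++ p.2).Nodup)
    (ρ : Ranking α) (hρ : ρ ∈ SStar C a b)
    (ht1 : p.1.toFinset = C.filter (fun c => ρ a < ρ c))
    (ht2 : p.2.toFinset = C.filter (fun c => ρ c < ρ b))
    (hc1 : p.1.Chain' (fun x y => ρ y < ρ x)) (hc2 : p.2.Chain' (fun x y => ρ y < ρ x)) :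
    (ρ a : ℕ) = Fintype.card α - 1 - p.1.length ∧ (ρ b : ℕ) = p.2.length ∧
    (∀ i (h : i < p.1.length), (ρ p.1[i] : ℕ) = Fintype.card α - 1 - i) ∧
    (∀ i (h : i < p.2.length), (ρ p.2[i] : ℕ) = p.2.length - 1 - i) := by
  rw [SStar, mem_filter] at hρ
  obtain ⟨-, h1, h2, h3⟩ := hρ
  have hnd1 : p.1.Nodup := hnd.of_append_left
  have hnd2 : p.2.Nodup := hnd.of_append_right
  haveI : IsTrans α (fun x y => ρ y < ρ x) := ⟨fun x y z h h' => lt_trans h' h⟩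
  have pw1 := List.pairwise_iff_get.mp (List.isChain_iff_pairwise.mp hc1)
  have pw2 := List.pairwise_iff_get.mp (List.isChain_iff_pairwise.mp hc2)
  have hA : univ.filter (fun y => ρ a < ρ y) = p.1.toFinset := by
    ext y
    simp only [mem_filter, mem_univ, true_and, ht1]
    refine ⟨fun h => ⟨?_, h⟩, fun h => h.2⟩
    by_contra hy
    exact absurd (h1 y (mem_compl.mpr hy)) (not_le.mpr h)
  have hB : univ.filter (fun y => ρ y < ρ b) = p.2.toFinset := by
    ext y
    simp only [mem_filter, mem_univ, true_and, ht2]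
    refine ⟨fun h => ⟨?_, h⟩, fun h => h.2⟩
    by_contra hy
    exact absurd (h2 y (mem_compl.mpr hy)) (not_le.mpr h)
  have hval_a : (ρ a : ℕ) = Fintype.card α - 1 - p.1.length := by
    have := rank_card_above ρ a
    rw [hA, List.toFinset_card_of_nodup hnd1] at this
    have h2 := (ρ a).isLt
    omega
  have hval_b : (ρ b : ℕ) = p.2.length := by
    have := rank_card_below ρ b
    rw [hB, List.toFinset_card_of_nodup hnd2] at this
    omega
  refine ⟨hval_a, hval_b, ?_, ?_⟩
  · intro i h
    have hxmem : p.1[i] ∈ p.1.toFinset := List.mem_toFinset.mpr (List.getElem_mem _)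
    have hax : ρ a < ρ p.1[i] := by rw [ht1, mem_filter] at hxmem; exact hxmem.2
    have hAx : univ.filter (fun y => ρ p.1[i] < ρ y) = (p.1.take i).toFinset := by
      ext y
      simp only [mem_filter, mem_univ, true_and, List.mem_toFinset]
      constructor
      · intro hxy
        have hy1 : y ∈ p.1 := by
          have : y ∈ p.1.toFinset := by
            rw [← hA, mem_filter]; exact ⟨mem_univ y, lt_trans hax hxy⟩
          exact List.mem_toFinset.mp this
        obtain ⟨j, hj, rfl⟩ := List.mem_iff_getElem.mp hy1
        have hji : j < i := by
          rcases lt_trichotomy j i with h' | rfl | h'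
          · exact h'
          · exact absurd hxy (lt_irrefl _)
          · exact absurd (pw1 ⟨i, h⟩ ⟨j, hj⟩ h') (not_lt.mpr (le_of_lt hxy))
        have : (p.1.take i)[j]'(by simp; omega) = p.1[j] := List.getElem_take
        exact this ▸ List.getElem_mem _
      · intro hy
        obtain ⟨j, hj, rfl⟩ := List.mem_iff_getElem.mp hy
        rw [List.length_take] at hj
        rw [List.getElem_take]
        exact pw1 ⟨j, by omega⟩ ⟨i, h⟩ (Fin.mk_lt_mk.mpr (by omega))
    have := rank_card_above ρ p.1[i]
    rw [hAx, List.toFinset_card_of_nodup (hnd1.sublist (List.take_sublist i p.1)),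
      List.length_take] at this
    have h2 := (ρ p.1[i]).isLt
    omega
  · intro i h
    have hxmem : p.2[i] ∈ p.2.toFinset := List.mem_toFinset.mpr (List.getElem_mem _)
    have hxb : ρ p.2[i] < ρ b := by rw [ht2, mem_filter] at hxmem; exact hxmem.2
    have hBx : univ.filter (fun y => ρ y < ρ p.2[i]) = (p.2.drop (i+1)).toFinset := by
      ext y
      simp only [mem_filter, mem_univ, true_and, List.mem_toFinset]
      constructor
      · intro hxy
        have hy2 : y ∈ p.2 := by
          have : y ∈ p.2.toFinset := by
            rw [← hB, mem_filter]; exact ⟨mem_univ y, lt_trans hxy hxb⟩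
          exact List.mem_toFinset.mp this
        obtain ⟨j, hj, rfl⟩ := List.mem_iff_getElem.mp hy2
        have hji : i < j := by
          rcases lt_trichotomy i j with h' | rfl | h'
          · exact h'
          · exact absurd hxy (lt_irrefl _)
          · exact absurd (pw2 ⟨j, hj⟩ ⟨i, h⟩ h') (not_lt.mpr (le_of_lt hxy))
        obtain ⟨t, rfl⟩ : ∃ t, j = i + 1 + t := ⟨j - (i+1), by omega⟩
        have : (p.2.drop (i+1))[t]'(by simp; omega) = p.2[i+1+t] := List.getElem_drop
        exact this ▸ List.getElem_mem _
      · intro hy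
        obtain ⟨t, ht, rfl⟩ := List.mem_iff_getElem.mp hy
        rw [List.length_drop] at ht
        rw [List.getElem_drop]
        exact pw2 ⟨i, h⟩ ⟨i+1+t, by omega⟩ (Fin.mk_lt_mk.mpr (by omega))
    have := rank_card_below ρ p.2[i]
    rw [hBx, List.toFinset_card_of_nodup (hnd2.sublist (List.drop_sublist (i+1) p.2)),
      List.length_drop] at this
    omega

private lemma part1 (C : Finset α) (a : α) (ha : a ∈ Cᶜ) (b : α) (hb : b ∈ Cᶜ) (hab : a ≠ b) :
    ∀ ρ ∈ SStar C a b, ∃! p : List α × List α,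
      (p.1 ++ p.2).Nodup ∧ (p.1 ++ p.2).toFinset = C ∧
      p.1.toFinset = C.filter (fun c => ρ a < ρ c) ∧
      p.2.toFinset = C.filter (fun c => ρ c < ρ b) ∧
      p.1.Chain' (fun x y => ρ y < ρ x) ∧ p.2.Chain' (fun x y => ρ y < ρ x) := by
  intro ρ hρ
  rw [SStar, mem_filter] at hρ
  obtain ⟨-, h1, h2, h3⟩ := hρ
  have hba : ρ b < ρ a := lt_of_le_of_ne (h1 b hb) (fun h => hab (ρ.injective h).symm)
  set s : α → α → Prop := fun x y => ρ y < ρ x with hs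
  haveI : IsTrans α s := ⟨fun x y z h h' => lt_trans h' h⟩
  haveI : IsAntisymm α s := ⟨fun x y h h' => absurd h (lt_asymm h')⟩
  set r : α → α → Prop := fun x y => ρ y ≤ ρ x with hr
  haveI : DecidableRel r := fun x y => inferInstanceAs (Decidable (_ ≤ _))
  haveI : IsTrans α r := ⟨fun x y z h h' => le_trans h' h⟩
  haveI : IsAntisymm α r := ⟨fun x y h h' => ρ.injective (le_antisymm h' h)⟩
  haveI : IsTotal α r := ⟨fun x y => le_total (ρ y) (ρ x)⟩
  -- canonical lists
  have mk : ∀ s0 : Finset α, ∃ l : List α, l.Nodup ∧ l.toFinset = s0 ∧ l.Pairwise s := by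
    intro s0
    refine ⟨s0.sort r, s0.sort_nodup r, s0.sort_toFinset r, ?_⟩
    have hpw : (s0.sort r).Pairwise r := s0.pairwise_sort r
    have hne : (s0.sort r).Pairwise (· ≠ ·) := s0.sort_nodup r
    exact (hpw.and hne).imp (fun {x y} h => lt_of_le_of_ne h.1 (fun he => h.2 (ρ.injective he.symm)))
  obtain ⟨l₁, hl₁n, hl₁t, hl₁p⟩ := mk (C.filter (fun c => ρ a < ρ c))
  obtain ⟨l₂, hl₂n, hl₂t, hl₂p⟩ := mk (C.filter (fun c => ρ c < ρ b))
  have hdisj : l₁.Disjoint l₂ := by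
    intro x hx1 hx2
    rw [← List.mem_toFinset, hl₁t, mem_filter] at hx1
    rw [← List.mem_toFinset, hl₂t, mem_filter] at hx2
    exact absurd (lt_trans hx1.2 (lt_trans hx2.2 hba)) (lt_irrefl _)
  have key : ∀ q : List α × List α,
      ((q.1 ++ q.2).Nodup ∧ (q.1 ++ q.2).toFinset = C ∧
      q.1.toFinset = C.filter (fun c => ρ a < ρ c) ∧
      q.2.toFinset = C.filter (fun c => ρ c < ρ b) ∧
      q.1.Chain' s ∧ q.2.Chain' s) → q = (l₁, l₂) := by
    rintro ⟨q₁, q₂⟩ ⟨hn, ht, ht1, ht2, hc1, hc2⟩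
    have hq₁n : q₁.Nodup := hn.of_append_left
    have hq₂n : q₂.Nodup := hn.of_append_right
    have e1 : q₁ = l₁ := by
      refine List.Perm.eq_of_pairwise' (List.isChain_iff_pairwise.mp hc1) hl₁p ?_
      have : List.Perm q₁.dedup l₁.dedup := List.toFinset_eq_iff_perm_dedup.mp (ht1.trans hl₁t.symm)
      rwa [hq₁n.dedup, hl₁n.dedup] at this
    have e2 : q₂ = l₂ := by
      refine List.Perm.eq_of_pairwise' (List.isChain_iff_pairwise.mp hc2) hl₂p ?_
      have : List.Perm q₂.dedup l₂.dedup := List.toFinset_eq_iff_perm_dedup.mp (ht2.trans hl₂t.symm)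
      rwa [hq₂n.dedup, hl₂n.dedup] at this
    simp [e1, e2]
  refine ⟨(l₁, l₂), ⟨?_, ?_, hl₁t, hl₂t, hl₁p.isChain, hl₂p.isChain⟩, key⟩
  · exact (List.nodup_append').mpr ⟨hl₁n, hl₂n, hdisj⟩
  · ext c
    simp only [List.toFinset_append, mem_union, List.mem_toFinset, ← List.mem_toFinset (l := l₁),
      hl₁t, hl₂t, mem_filter]
    constructor
    · rintro (h | h) <;> exact h.1
    · intro hc
      rcases h3 c hc with h | h
      · exact Or.inl ⟨hc, h⟩
      · exact Or.inr ⟨hc, h⟩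

private lemma part2 (C : Finset α) (hCc : 2 ≤ Cᶜ.card)
    (a : α) (ha : a ∈ Cᶜ) (b : α) (hb : b ∈ Cᶜ) (hab : a ≠ b)
    (p : List α × List α) (hnd : (p.1 ++ p.2).Nodup) (htf : (p.1 ++ p.2).toFinset = C) :
    ((SStar C a b).filter (fun ρ : Ranking α =>
        p.1.toFinset = C.filter (fun c => ρ a < ρ c) ∧
        p.2.toFinset = C.filter (fun c => ρ c < ρ b) ∧
        p.1.IsChain (fun x y => ρ y < ρ x) ∧ p.2.IsChain (fun x y => ρ y < ρ x))).card
      = (Cᶜ.card - 2).factorial := by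
  classical
  set n := Fintype.card α with hn
  set k₁ := p.1.length with hk₁
  set k₂ := p.2.length with hk₂
  set m := Cᶜ.card with hm
  have haC : a ∉ C := (mem_compl).mp ha
  have hbC : b ∉ C := (mem_compl).mp hb
  have hCcard : C.card = k₁ + k₂ := by
    rw [← htf, List.toFinset_card_of_nodup hnd, List.length_append]
  have hnm : n = k₁ + k₂ + m := by
    have := Finset.card_add_card_compl C
    omega
  -- the middle set
  set M : Finset α := Cᶜ \ {a, b} with hM
  have hMcard : M.card = m - 2 := by
    rw [hM, card_sdiff_of_subset (by intro x hx; simp at hx; rcases hx with rfl | rfl <;> assumption)]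
    rw [card_pair hab]
  set Ml := M.toList with hMl
  have hMln : Ml.Nodup := M.nodup_toList
  have hMlmem : ∀ x, x ∈ Ml ↔ x ∈ M := fun x => mem_toList
  have hMld : Ml.length = m - 2 := by rw [hMl, length_toList, hMcard]
  have hsub : ∀ x, x ∈ p.1 ∨ x ∈ p.2 → x ∈ C := by
    intro x hx
    rw [← htf, List.mem_toFinset, List.mem_append]
    exact hx
  have hMnot : ∀ x ∈ Ml, x ∉ C ∧ x ≠ a ∧ x ≠ b := by
    intro x hx
    rw [hMlmem, hM, mem_sdiff, mem_compl] at hx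
    simp only [mem_insert, mem_singleton] at hx
    exact ⟨hx.1, fun h => hx.2 (Or.inl h), fun h => hx.2 (Or.inr h)⟩
  -- the reference list
  set L : List α := p.1 ++ a :: (Ml ++ b :: p.2) with hL
  have hLnd : L.Nodup := by
    have nd2 : (b :: p.2).Nodup :=
      List.nodup_cons.mpr ⟨fun h => hbC (hsub b (Or.inr h)), hnd.of_append_right⟩
    have nd3 : (Ml ++ b :: p.2).Nodup := by
      refine hMln.append nd2 ?_
      intro x hx hx2
      rcases List.mem_cons.mp hx2 with rfl | hx2
      · exact (hMnot x hx).2.2 rfl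
      · exact (hMnot x hx).1 (hsub x (Or.inr hx2))
    have nd4 : (a :: (Ml ++ b :: p.2)).Nodup := by
      refine List.nodup_cons.mpr ⟨?_, nd3⟩
      simp only [List.mem_append, List.mem_cons]
      rintro (h | rfl | h)
      · exact (hMnot a h).2.1 rfl
      · exact hab rfl
      · exact haC (hsub a (Or.inr h))
    rw [hL]
    refine (hnd.of_append_left).append nd4 ?_
    intro x hx hx2
    have hxC := hsub x (Or.inl hx)
    simp only [List.mem_cons, List.mem_append] at hx2
    rcases hx2 with rfl | h | rfl | h
    · exact haC hxC
    · exact (hMnot x h).1 hxC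
    · exact hbC hxC
    · exact (List.nodup_append'.mp hnd).2.2 hx h
  have hLmem : ∀ x, x ∈ L := by
    intro x
    rw [hL]
    simp only [List.mem_append, List.mem_cons]
    by_cases hx : x ∈ C
    · rw [← htf, List.mem_toFinset, List.mem_append] at hx
      rcases hx with h | h
      · exact Or.inl h
      · exact Or.inr (Or.inr (Or.inr (Or.inr h)))
    · by_cases hxa : x = a
      · exact Or.inr (Or.inl hxa)
      · by_cases hxb : x = b
        · exact Or.inr (Or.inr (Or.inr (Or.inl hxb)))
        · refine Or.inr (Or.inr (Or.inl ?_))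
          rw [hMlmem, hM, mem_sdiff, mem_compl]
          simp only [mem_insert, mem_singleton]
          exact ⟨hx, fun h => by rcases h with h | h; exacts [hxa h, hxb h]⟩
  have hLlen : L.length = n := by
    rw [hL]
    simp only [List.length_append, List.length_cons, hMld]
    omega
  -- the reference ranking
  set e : Fin L.length ≃ α := List.Nodup.getEquivOfForallMemList L hLnd hLmem with he
  set ρ₀ : Ranking α := (e.symm.trans (finCongr hLlen)).trans Fin.revPerm with hρ₀def
  have hρ₀get : ∀ (i : ℕ) (h : i < L.length), (ρ₀ L[i] : ℕ) = n - 1 - i := by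
    intro i h
    have h1 : e ⟨i, h⟩ = L[i] := by
      rw [he]; simp [List.Nodup.getEquivOfForallMemList]
    have h2 : e.symm L[i] = ⟨i, h⟩ := by rw [← h1, Equiv.symm_apply_apply]
    rw [hρ₀def]
    simp only [Equiv.trans_apply, h2, finCongr_apply, Fin.revPerm_apply]
    rw [Fin.val_rev]
    simp only [Fin.coe_cast]
    omega
  have hgetx : ∀ (l1 l2 : List α) (x : α) (h : l1.length < (l1 ++ x :: l2).length),
      (l1 ++ x :: l2)[l1.length]'h = x := by
    intro l1 l2 x h
    rw [List.getElem_append_right (Nat.le_refl _)]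
    simp
  have hv' : ∀ (l1 l2 : List α) (x : α), L = l1 ++ x :: l2 → (ρ₀ x : ℕ) = n - 1 - l1.length := by
    intro l1 l2 x hLeq
    have hlt : l1.length < L.length := by
      rw [hLeq, List.length_append, List.length_cons]; omega
    have := hρ₀get l1.length hlt
    rwa [List.getElem_of_eq hLeq, hgetx l1 l2 x] at this
  -- values of ρ₀
  have hva : (ρ₀ a : ℕ) = n - 1 - k₁ := by
    have := hv' p.1 (Ml ++ b :: p.2) a rfl
    rwa [← hk₁] at this
  have hvb : (ρ₀ b : ℕ) = k₂ := by
    have := hv' (p.1 ++ a :: Ml) p.2 b (by simp [hL])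
    rw [List.length_append, List.length_cons, hMld] at this
    omega
  have hv1 : ∀ (i : ℕ) (h : i < k₁), (ρ₀ p.1[i] : ℕ) = n - 1 - i := by
    intro i h
    have hsplit : p.1 = p.1.take i ++ p.1[i] :: p.1.drop (i + 1) := by
      rw [List.getElem_cons_drop, List.take_append_drop]
    have hLeq : L = p.1.take i ++ p.1[i] :: (p.1.drop (i + 1) ++ (a :: (Ml ++ b :: p.2))) := by
      rw [hL]
      conv_lhs => rw [hsplit]
      simp only [List.append_assoc, List.cons_append]
    have := hv' _ _ _ hLeq
    rwa [List.length_take, Nat.min_eq_left (le_of_lt h)] at this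
  have hvM : ∀ (i : ℕ) (h : i < Ml.length), (ρ₀ Ml[i] : ℕ) = n - 1 - (k₁ + 1 + i) := by
    intro i h
    have hsplit : Ml = Ml.take i ++ Ml[i] :: Ml.drop (i + 1) := by
      rw [List.getElem_cons_drop, List.take_append_drop]
    have hLeq : L = (p.1 ++ a :: Ml.take i) ++ Ml[i] :: (Ml.drop (i + 1) ++ b :: p.2) := by
      rw [hL]
      conv_lhs => rw [hsplit]
      simp only [List.append_assoc, List.cons_append]
    have := hv' _ _ _ hLeq
    rw [List.length_append, List.length_cons, List.length_take,
      Nat.min_eq_left (le_of_lt h)] at this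
    rw [this]
    omega
  have hv2 : ∀ (i : ℕ) (h : i < k₂), (ρ₀ p.2[i] : ℕ) = k₂ - 1 - i := by
    intro i h
    have hsplit : p.2 = p.2.take i ++ p.2[i] :: p.2.drop (i + 1) := by
      rw [List.getElem_cons_drop, List.take_append_drop]
    have hLeq : L = (p.1 ++ a :: (Ml ++ b :: p.2.take i)) ++
        p.2[i] :: p.2.drop (i + 1) := by
      rw [hL]
      conv_lhs => rw [hsplit]
      simp only [List.append_assoc, List.cons_append]
    have := hv' _ _ _ hLeq
    rw [List.length_append, List.length_cons, List.length_append, List.length_cons,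
      List.length_take, Nat.min_eq_left (le_of_lt h), hMld] at this
    rw [this]
    omega
  -- the cell as image of permutations fixing everything outside the middle band
  have hk1n : k₁ + k₂ + 2 ≤ n := by omega
  set F := (SStar C a b).filter (fun ρ : Ranking α =>
        p.1.toFinset = C.filter (fun c => ρ a < ρ c) ∧
        p.2.toFinset = C.filter (fun c => ρ c < ρ b) ∧
        p.1.IsChain (fun x y => ρ y < ρ x) ∧ p.2.IsChain (fun x y => ρ y < ρ x)) with hF
  have hcases : ∀ x : α, (∃ (i : ℕ) (h : i < p.1.length), p.1[i] = x) ∨ x = a ∨ x ∈ Ml ∨ x = b ∨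
      (∃ (i : ℕ) (h : i < p.2.length), p.2[i] = x) := by
    intro x
    by_cases hx : x ∈ C
    · rw [← htf, List.mem_toFinset, List.mem_append] at hx
      rcases hx with h | h
      · exact Or.inl (List.mem_iff_getElem.mp h)
      · exact Or.inr (Or.inr (Or.inr (Or.inr (List.mem_iff_getElem.mp h))))
    · by_cases hxa : x = a
      · exact Or.inr (Or.inl hxa)
      · by_cases hxb : x = b
        · exact Or.inr (Or.inr (Or.inr (Or.inl hxb)))
        · refine Or.inr (Or.inr (Or.inl ?_))
          rw [hMlmem, hM, mem_sdiff, mem_compl]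
          simp only [mem_insert, mem_singleton]
          exact ⟨hx, fun h => by rcases h with h | h; exacts [hxa h, hxb h]⟩
  have keyJ : ∀ τ : Equiv.Perm (Fin n),
      (∀ j : Fin n, ¬(k₂ < (j : ℕ) ∧ (j : ℕ) < n - 1 - k₁) → τ j = j) → ρ₀.trans τ ∈ F := by
    intro τ hτ
    have hτJ : ∀ j : Fin n, (k₂ < (j : ℕ) ∧ (j : ℕ) < n - 1 - k₁) →
        (k₂ < (τ j : ℕ) ∧ (τ j : ℕ) < n - 1 - k₁) := by
      intro j hj
      by_contra hc
      have h1 := hτ (τ j) hc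
      exact hc (by rw [τ.injective h1]; exact hj)
    have v'a : ((ρ₀.trans τ) a : ℕ) = n - 1 - k₁ := by
      show (τ (ρ₀ a) : ℕ) = _
      rw [hτ (ρ₀ a) (by rw [hva]; omega), hva]
    have v'b : ((ρ₀.trans τ) b : ℕ) = k₂ := by
      show (τ (ρ₀ b) : ℕ) = _
      rw [hτ (ρ₀ b) (by rw [hvb]; omega), hvb]
    have v'1 : ∀ (i : ℕ) (h : i < k₁), ((ρ₀.trans τ) p.1[i] : ℕ) = n - 1 - i := by
      intro i h
      show (τ (ρ₀ p.1[i]) : ℕ) = _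
      rw [hτ (ρ₀ p.1[i]) (by rw [hv1 i h]; omega), hv1 i h]
    have v'2 : ∀ (i : ℕ) (h : i < k₂), ((ρ₀.trans τ) p.2[i] : ℕ) = k₂ - 1 - i := by
      intro i h
      show (τ (ρ₀ p.2[i]) : ℕ) = _
      rw [hτ (ρ₀ p.2[i]) (by rw [hv2 i h]; omega), hv2 i h]
    have v'M : ∀ x ∈ Ml, k₂ < ((ρ₀.trans τ) x : ℕ) ∧ ((ρ₀.trans τ) x : ℕ) < n - 1 - k₁ := by
      intro x hx
      obtain ⟨i, hi, rfl⟩ := List.mem_iff_getElem.mp hx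
      have hiv := hvM i hi
      have him : i < m - 2 := by rw [← hMld]; exact hi
      exact hτJ (ρ₀ Ml[i]) (by omega)
    rw [hF, mem_filter, SStar, mem_filter]
    refine ⟨⟨mem_univ _, ?_, ?_, ?_⟩, ?_, ?_, ?_, ?_⟩
    · intro c hc
      have hcC : c ∉ C := (mem_compl).mp hc
      rcases hcases c with ⟨i, hi, rfl⟩ | rfl | h | rfl | ⟨i, hi, rfl⟩
      · exact absurd (hsub _ (Or.inl (List.getElem_mem _))) hcC
      · exact le_refl _
      · have := v'M c h
        rw [Fin.le_def]
        omega
      · rw [Fin.le_def, v'a, v'b]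
        omega
      · exact absurd (hsub _ (Or.inr (List.getElem_mem _))) hcC
    · intro c hc
      have hcC : c ∉ C := (mem_compl).mp hc
      rcases hcases c with ⟨i, hi, rfl⟩ | rfl | h | rfl | ⟨i, hi, rfl⟩
      · exact absurd (hsub _ (Or.inl (List.getElem_mem _))) hcC
      · rw [Fin.le_def, v'a, v'b]
        omega
      · have := v'M c h
        rw [Fin.le_def]
        omega
      · exact le_refl _
      · exact absurd (hsub _ (Or.inr (List.getElem_mem _))) hcC
    · intro c hc
      rcases hcases c with ⟨i, hi, rfl⟩ | rfl | h | rfl | ⟨i, hi, rfl⟩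
      · left
        rw [Fin.lt_def, v'a, v'1 i hi]
        omega
      · exact absurd hc haC
      · exact absurd ((hMnot c h).1 hc) not_false
      · exact absurd hc hbC
      · right
        rw [Fin.lt_def, v'b, v'2 i hi]
        omega
    · ext c
      simp only [List.mem_toFinset, mem_filter]
      constructor
      · intro hcp
        obtain ⟨i, hi, rfl⟩ := List.mem_iff_getElem.mp hcp
        refine ⟨hsub _ (Or.inl (List.getElem_mem _)), ?_⟩
        rw [Fin.lt_def, v'a, v'1 i hi]
        omega
      · rintro ⟨hcC, hlt⟩
        rcases hcases c with ⟨i, hi, rfl⟩ | rfl | h | rfl | ⟨i, hi, rfl⟩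
        · exact List.getElem_mem _
        · exact absurd hlt (lt_irrefl _)
        · exact absurd ((hMnot c h).1 hcC) not_false
        · exact absurd hcC hbC
        · rw [Fin.lt_def, v'a, v'2 i hi] at hlt
          omega
    · ext c
      simp only [List.mem_toFinset, mem_filter]
      constructor
      · intro hcp
        obtain ⟨i, hi, rfl⟩ := List.mem_iff_getElem.mp hcp
        refine ⟨hsub _ (Or.inr (List.getElem_mem _)), ?_⟩
        rw [Fin.lt_def, v'b, v'2 i hi]
        omega
      · rintro ⟨hcC, hlt⟩
        rcases hcases c with ⟨i, hi, rfl⟩ | rfl | h | rfl | ⟨i, hi, rfl⟩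
        · rw [Fin.lt_def, v'b, v'1 i hi] at hlt
          omega
        · exact absurd hcC haC
        · exact absurd ((hMnot c h).1 hcC) not_false
        · exact absurd hlt (lt_irrefl _)
        · exact List.getElem_mem _
    · rw [List.isChain_iff_getElem]
      intro i h
      rw [Fin.lt_def, v'1 i (by omega), v'1 (i+1) (by omega)]
      omega
    · rw [List.isChain_iff_getElem]
      intro i h
      rw [Fin.lt_def, v'2 i (by omega), v'2 (i+1) (by omega)]
      omega
  have hρ₀F : ρ₀ ∈ F := by
    have := keyJ (Equiv.refl _) (fun j _ => rfl)
    rwa [Equiv.trans_refl] at this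
  have himg : F = (univ.filter (fun τ : Equiv.Perm (Fin n) =>
      ∀ j : Fin n, ¬(k₂ < (j : ℕ) ∧ (j : ℕ) < n - 1 - k₁) → τ j = j)).image
        (fun τ => ρ₀.trans τ) := by
    apply Finset.Subset.antisymm
    · intro ρ hρF
      rw [mem_image]
      refine ⟨ρ₀.symm.trans ρ, ?_, by ext x; simp⟩
      rw [mem_filter]
      refine ⟨mem_univ _, ?_⟩
      -- forced values for ρ and ρ₀
      rw [hF, mem_filter] at hρF hρ₀F
      obtain ⟨hρS, ht1ρ, ht2ρ, hc1ρ, hc2ρ⟩ := hρF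
      obtain ⟨hρ₀S, ht1ρ₀, ht2ρ₀, hc1ρ₀, hc2ρ₀⟩ := hρ₀F
      have vρ := forced C a b hb p hnd ρ hρS ht1ρ ht2ρ hc1ρ hc2ρ
      have vρ₀ := forced C a b hb p hnd ρ₀ hρ₀S ht1ρ₀ ht2ρ₀ hc1ρ₀ hc2ρ₀
      have agree : ∀ x : α, x ∉ Ml → ρ x = ρ₀ x := by
        intro x hx
        rcases hcases x with ⟨i, hi, rfl⟩ | rfl | h | rfl | ⟨i, hi, rfl⟩
        · exact Fin.val_injective (by rw [vρ.2.2.1 i hi, vρ₀.2.2.1 i hi])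
        · exact Fin.val_injective (by rw [vρ.1, vρ₀.1])
        · exact absurd h hx
        · exact Fin.val_injective (by rw [vρ.2.1, vρ₀.2.1])
        · exact Fin.val_injective (by rw [vρ.2.2.2 i hi, vρ₀.2.2.2 i hi])
      intro j hj
      show ρ (ρ₀.symm j) = j
      have hnotM : ρ₀.symm j ∉ Ml := by
        intro hmem
        obtain ⟨i, hi, hEq⟩ := List.mem_iff_getElem.mp hmem
        have hiv := hvM i hi
        have him : i < m - 2 := by rw [← hMld]; exact hi
        rw [hEq, Equiv.apply_symm_apply] at hiv
        omega
      rw [agree _ hnotM, Equiv.apply_symm_apply]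
    · intro ρ hρ
      rw [mem_image] at hρ
      obtain ⟨τ, hτ, rfl⟩ := hρ
      rw [mem_filter] at hτ
      exact keyJ τ hτ.2
  have hinj : Function.Injective (fun τ : Equiv.Perm (Fin n) => ρ₀.trans τ) := by
    intro τ τ' hEq
    ext j
    have h2 : τ j = τ' j := by
      simpa using congrArg (fun f : Ranking α => f (ρ₀.symm j)) hEq
    rw [h2]
  rw [himg, card_image_of_injective _ hinj]
  -- count the fixing permutations
  have hcard : (univ.filter (fun τ : Equiv.Perm (Fin n) =>
      ∀ j : Fin n, ¬(k₂ < (j : ℕ) ∧ (j : ℕ) < n - 1 - k₁) → τ j = j)).card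
      = (m - 2).factorial := by
    rw [← Fintype.card_subtype]
    rw [← Fintype.card_congr
      (Equiv.Perm.subtypeEquivSubtypePerm (fun j : Fin n => k₂ < (j : ℕ) ∧ (j : ℕ) < n - 1 - k₁))]
    rw [Fintype.card_perm]
    congr 1
    rw [Fintype.card_subtype]
    have : (univ.filter (fun j : Fin n => k₂ < (j : ℕ) ∧ (j : ℕ) < n - 1 - k₁))
        = Finset.Ioo (⟨k₂, by omega⟩ : Fin n) ⟨n - 1 - k₁, by omega⟩ := by
      ext j
      simp [Finset.mem_Ioo, Fin.lt_def]
    rw [this, Fin.card_Ioo]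
    show (n - 1 - k₁) - k₂ - 1 = m - 2
    omega
  rw [hcard]

end SStarDecompositionAux

/-- Lemma (splitting decomposition): `S*(a, C, b)` decomposes as a disjoint union indexed by
ordered pairs `(s₁, s₂)` of disjoint (duplicate-free) lists whose underlying sets partition `C`:
each ranking `ρ ∈ S*(a, C, b)` determines exactly one such pair — `s₁` lists, in ρ-decreasing
order, the elements of `C` above `a`, and `s₂` lists, in ρ-decreasing order, those below `b` —
and each cell of the decomposition has exactly `(|A∖C| − 2)!` rankings. -/
theorem SStar_decomposition [Fintype α] [DecidableEq α]
    (C : Finset α) (hCc : 2 ≤ Cᶜ.card)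
    (a : α) (ha : a ∈ Cᶜ) (b : α) (hb : b ∈ Cᶜ) (hab : a ≠ b) :
    (∀ ρ ∈ SStar C a b, ∃! p : List α × List α,
      (p.1 ++ p.2).Nodup ∧ (p.1 ++ p.2).toFinset = C ∧
      p.1.toFinset = C.filter (fun c => ρ a < ρ c) ∧
      p.2.toFinset = C.filter (fun c => ρ c < ρ b) ∧
      p.1.Chain' (fun x y => ρ y < ρ x) ∧ p.2.Chain' (fun x y => ρ y < ρ x)) ∧
    ∀ p : List α × List α, (p.1 ++ p.2).Nodup → (p.1 ++ p.2).toFinset = C →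
      ((SStar C a b).filter (fun ρ : Ranking α =>
          p.1.toFinset = C.filter (fun c => ρ a < ρ c) ∧
          p.2.toFinset = C.filter (fun c => ρ c < ρ b) ∧
          p.1.IsChain (fun x y => ρ y < ρ x) ∧ p.2.IsChain (fun x y => ρ y < ρ x))).card
        = (Cᶜ.card - 2).factorial :=
  ⟨part1 C a ha b hb hab, fun p hnd htf => part2 C hCc a ha b hb hab p hnd htf⟩
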